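/- Let p be prime, k ≤ p−1, and φ : (ℤ/pℤ)ⁿ → ℂ a phase polynomial of degree k with φ^p = 1. Then there is a polynomial P ∈ (ℤ/pℤ)[X₁,…,Xₙ] of total degree ≤ k such that φ(x) = e^{2πi·P(x)/p} for all x, where P(x) ∈ ℤ/pℤ is evaluated and lifted to {0,…,p−1}. -/

import Mathlib

/-- Multiplicative derivative: `Δ_t φ (x) = φ x * conj (φ (x+t))`. -/
noncomputable def phaseDeriv {A : Type*} [AddCommGroup A] (φ : A → ℂ) (t : A) : A → ℂ :=
  fun x => φ x * (starRingEnd ℂ) (φ (x + t))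

/-- `φ` is a phase polynomial of degree `k`: it has modulus `1` and any `k+1`
consecutive multiplicative derivatives yield the constant `1`. -/
noncomputable def IsPhasePoly {A : Type*} [AddCommGroup A] (k : ℕ) (φ : A → ℂ) : Prop :=
  (∀ x, ‖φ x‖ = 1) ∧
    ∀ t : Fin (k + 1) → A, ∀ x, ((List.ofFn t).foldl phaseDeriv φ) x = 1

namespace Stmt18

open MvPolynomial Function

/-! ### One-variable finite differences -/

/-- the one-variable finite difference operator -/
def dd {R : Type*} [CommRing R] (g : R → R) : R → R := fun y => g y - g (y + 1)

theorem dd_iter_sum {R : Type*} [CommRing R] {α : Type*} (m : ℕ) (s : Finset α)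
    (c : α → R) (g : α → R → R) :
    dd^[m] (fun y => ∑ a ∈ s, c a * g a y) = fun y => ∑ a ∈ s, c a * dd^[m] (g a) y := by
  induction m generalizing g with
  | zero => simp
  | succ m ih =>
      rw [Function.iterate_succ_apply]
      have h1 : dd (fun y => ∑ a ∈ s, c a * g a y) = fun y => ∑ a ∈ s, c a * dd (g a) y := by
        funext y
        simp only [dd, ← Finset.sum_sub_distrib, mul_sub]
      rw [h1, ih]
      funext y
      refine Finset.sum_congr rfl fun a _ => ?_
      rw [← Function.iterate_succ_apply]

theorem dd_pow_step {R : Type*} [CommRing R] (r : ℕ) :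
    dd ((· ^ r) : R → R) = fun y => ∑ s ∈ Finset.range r, (-(r.choose s : R)) * y ^ s := by
  funext y
  have h := add_pow y (1 : R) r
  simp only [one_pow, mul_one] at h
  simp only [dd]
  rw [h, Finset.sum_range_succ, Nat.choose_self, Nat.cast_one, mul_one]
  have : ∑ s ∈ Finset.range r, (-(r.choose s : R)) * y ^ s
      = -∑ s ∈ Finset.range r, y ^ s * (r.choose s : R) := by
    rw [← Finset.sum_neg_distrib]
    exact Finset.sum_congr rfl fun s _ => by ring
  rw [this]
  ring

theorem dd_pow_key {R : Type*} [CommRing R] (r : ℕ) :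
    (∀ m, r < m → dd^[m] ((· ^ r) : R → R) = fun _ => 0) ∧
      dd^[r] ((· ^ r) : R → R) = fun _ => (-1 : R) ^ r * (r.factorial : R) := by
  induction r using Nat.strong_induction_on with
  | _ r IH =>
  constructor
  · intro m hm
    obtain ⟨m', rfl⟩ : ∃ m', m = m' + 1 := ⟨m - 1, by omega⟩
    rw [Function.iterate_succ_apply, dd_pow_step, dd_iter_sum]
    funext y
    refine Finset.sum_eq_zero fun s hs => ?_
    have hs' : s < r := Finset.mem_range.mp hs
    rw [(IH s hs').1 m' (by omega)]
    simp
  · cases r with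
    | zero => funext y; simp
    | succ r' =>
      rw [Function.iterate_succ_apply, dd_pow_step, dd_iter_sum]
      funext y
      rw [Finset.sum_eq_single r' (fun s hs hne => by
            rw [(IH s (Finset.mem_range.mp hs)).1 r'
              (by have := Finset.mem_range.mp hs; omega)]; simp)
          (fun h => absurd (Finset.mem_range.mpr (Nat.lt_succ_self r')) h)]
      rw [(IH r' (Nat.lt_succ_self r')).2]
      simp only [Nat.choose_succ_self_right, Nat.factorial_succ]
      push_cast
      ring

/-! ### Multi-variable difference operators -/

variable {p n : ℕ}

/-- additive multiplicative-derivative analogue -/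
def Dop (f : (Fin n → ZMod p) → ZMod p) (t : Fin n → ZMod p) : (Fin n → ZMod p) → ZMod p :=
  fun x => f x - f (x + t)

/-- iterated difference along a list of shifts -/
def Dfold (L : List (Fin n → ZMod p)) (f : (Fin n → ZMod p) → ZMod p) :
    (Fin n → ZMod p) → ZMod p :=
  L.foldl Dop f

theorem Dfold_append (L₁ L₂ : List (Fin n → ZMod p)) (f) :
    Dfold (L₁ ++ L₂) f = Dfold L₂ (Dfold L₁ f) :=
  List.foldl_append ..

theorem Dfold_zero (L : List (Fin n → ZMod p)) :
    Dfold L (fun _ => (0 : ZMod p)) = fun _ => 0 := by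
  induction L with
  | nil => rfl
  | cons t L ih =>
      show Dfold L (Dop (fun _ => 0) t) = _
      have : Dop (fun _ => (0 : ZMod p)) t = fun _ => 0 := by funext x; simp [Dop]
      rw [this, ih]

theorem Dfold_sum {α : Type*} (L : List (Fin n → ZMod p)) (s : Finset α)
    (c : α → ZMod p) (F : α → (Fin n → ZMod p) → ZMod p) :
    Dfold L (fun x => ∑ a ∈ s, c a * F a x) = fun x => ∑ a ∈ s, c a * Dfold L (F a) x := by
  induction L generalizing F with
  | nil => rfl
  | cons t L ih =>
      show Dfold L (Dop _ t) = _
      have h1 : Dop (fun x => ∑ a ∈ s, c a * F a x) t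
          = fun x => ∑ a ∈ s, c a * Dop (F a) t x := by
        funext x
        simp only [Dop, ← Finset.sum_sub_distrib, mul_sub]
      rw [h1, ih]
      rfl

/-- a product of one-variable functions -/
def prodfun (h : Fin n → ZMod p → ZMod p) : (Fin n → ZMod p) → ZMod p :=
  fun x => ∏ j, h j (x j)

theorem Dop_single (h : Fin n → ZMod p → ZMod p) (j : Fin n) :
    Dop (prodfun h) (Pi.single j 1) = prodfun (Function.update h j (dd (h j))) := by
  funext x
  simp only [Dop, prodfun]
  have h1 : ∀ i ∈ Finset.univ.erase j, h i (((x + Pi.single j (1 : ZMod p) : Fin n → ZMod p)) i) = h i (x i) := by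
    intro i hi
    have hij : i ≠ j := Finset.ne_of_mem_erase hi
    simp [Pi.single_eq_of_ne hij]
  have h2 : ∀ i ∈ Finset.univ.erase j,
      Function.update h j (dd (h j)) i (x i) = h i (x i) := by
    intro i hi
    rw [Function.update_of_ne (Finset.ne_of_mem_erase hi)]
  have e1 : (∏ i, h i (x i)) = (∏ i ∈ Finset.univ.erase j, h i (x i)) * h j (x j) :=
    (Finset.prod_erase_mul _ _ (Finset.mem_univ j)).symm
  have e2 : (∏ i, h i (((x + Pi.single j (1 : ZMod p) : Fin n → ZMod p)) i))
      = (∏ i ∈ Finset.univ.erase j, h i (x i)) * h j (x j + 1) := by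
    rw [← Finset.prod_erase_mul _ _ (Finset.mem_univ j)]
    congr 1
    · exact Finset.prod_congr rfl h1
    · simp
  have e3 : (∏ i, Function.update h j (dd (h j)) i (x i))
      = (∏ i ∈ Finset.univ.erase j, h i (x i)) * dd (h j) (x j) := by
    rw [← Finset.prod_erase_mul _ _ (Finset.mem_univ j)]
    congr 1
    · exact Finset.prod_congr rfl h2
    · rw [Function.update_self]
  rw [e1, e2, e3]
  simp only [dd]
  ring

theorem Dop_single_iter (h : Fin n → ZMod p → ZMod p) (j : Fin n) (m : ℕ) :
    (fun g => Dop g (Pi.single j 1))^[m] (prodfun h)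
      = prodfun (Function.update h j (dd^[m] (h j))) := by
  induction m generalizing h with
  | zero => simp
  | succ m ih =>
      rw [Function.iterate_succ_apply]
      show (fun g => Dop g (Pi.single j 1))^[m] (Dop (prodfun h) (Pi.single j 1)) = _
      rw [Dop_single, ih, Function.update_self, Function.update_idem,
        ← Function.iterate_succ_apply]

theorem Dfold_replicate (m : ℕ) (t : Fin n → ZMod p) (f) :
    Dfold (List.replicate m t) f = (fun g => Dop g t)^[m] f := by
  induction m generalizing f with
  | zero => rfl
  | succ m ih =>
      rw [List.replicate_succ]
      show Dfold (List.replicate m t) (Dop f t) = _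
      rw [ih, ← Function.iterate_succ_apply]

/-- list of elementary shifts; `a j` copies of the `j`-th unit vector for each `j` in `js`. -/
def steps (a : Fin n → ℕ) : List (Fin n) → List (Fin n → ZMod p)
  | [] => []
  | j :: js => List.replicate (a j) (Pi.single j 1) ++ steps a js

theorem steps_length (a : Fin n → ℕ) (js : List (Fin n)) :
    (steps a js (p := p)).length = (js.map a).sum := by
  induction js with
  | nil => rfl
  | cons j js ih => simp [steps, ih]

theorem Dfold_steps (a : Fin n → ℕ) (js : List (Fin n)) (h : Fin n → ZMod p → ZMod p) :
    Dfold (steps a js) (prodfun h)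
      = prodfun (js.foldl (fun h' j => Function.update h' j (dd^[a j] (h' j))) h) := by
  induction js generalizing h with
  | nil => rfl
  | cons j js ih =>
      show Dfold (List.replicate (a j) (Pi.single j 1) ++ steps a js) (prodfun h) = _
      rw [Dfold_append, Dfold_replicate, Dop_single_iter, ih]
      rfl

theorem foldl_update_notmem (a : Fin n → ℕ) (js : List (Fin n))
    (h : Fin n → ZMod p → ZMod p) (i : Fin n) (hi : i ∉ js) :
    (js.foldl (fun h' j => Function.update h' j (dd^[a j] (h' j))) h) i = h i := by
  induction js generalizing h with
  | nil => rfl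
  | cons j js ih =>
      have hij : i ≠ j := fun hh => hi (hh ▸ List.mem_cons_self)
      have hi' : i ∉ js := fun hh => hi (List.mem_cons_of_mem _ hh)
      show (js.foldl _ (Function.update h j (dd^[a j] (h j)))) i = h i
      rw [ih _ hi', Function.update_of_ne hij]

theorem foldl_update_mem (a : Fin n → ℕ) (js : List (Fin n)) (hnd : js.Nodup)
    (h : Fin n → ZMod p → ZMod p) (i : Fin n) (hi : i ∈ js) :
    (js.foldl (fun h' j => Function.update h' j (dd^[a j] (h' j))) h) i = dd^[a i] (h i) := by
  induction js generalizing h with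
  | nil => cases hi
  | cons j js ih =>
      obtain ⟨hj, hnd'⟩ := List.nodup_cons.mp hnd
      show (js.foldl _ (Function.update h j (dd^[a j] (h j)))) i = _
      rcases List.mem_cons.mp hi with rfl | hi'
      · rw [foldl_update_notmem _ _ _ _ hj, Function.update_self]
      · have hij : i ≠ j := fun hh => hj (hh ▸ hi')
        rw [ih hnd' _ hi', Function.update_of_ne hij]

theorem Dfold_steps_univ (a : Fin n → ℕ) (h : Fin n → ZMod p → ZMod p) :
    Dfold (steps a (List.finRange n)) (prodfun h) = prodfun (fun i => dd^[a i] (h i)) := by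
  have hfun : (List.finRange n).foldl (fun h' j => Function.update h' j (dd^[a j] (h' j))) h
      = fun i => dd^[a i] (h i) := by
    funext i
    exact foldl_update_mem a _ (List.nodup_finRange n) h i (List.mem_finRange i)
  rw [Dfold_steps, hfun]

theorem steps_univ_length (a : Fin n → ℕ) :
    (steps a (List.finRange n) (p := p)).length = ∑ i, a i := by
  rw [steps_length, ← List.ofFn_eq_map, List.sum_ofFn]

/-! ### The main coefficient-vanishing argument -/

theorem coeff_eq_zero_core (p n k : ℕ) [Fact p.Prime]
    (l : (Fin n → ZMod p) → ZMod p)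
    (hvan : ∀ L : List (Fin n → ZMod p), k + 1 ≤ L.length → Dfold L l = fun _ => 0)
    (P : MvPolynomial (Fin n) (ZMod p)) (hP : ∀ x, eval x P = l x)
    (hres : ∀ s ∈ P.support, ∀ j, (s : (Fin n) →₀ ℕ) j ≤ p - 1)
    (a : Fin n →₀ ℕ) (hk : k + 1 ≤ ∑ j, a j)
    (hhigh : ∀ a' ∈ P.support, a ≤ a' → a ≠ a' → coeff a' P = 0) :
    coeff a P = 0 := by
  by_cases hmem : a ∈ P.support
  swap
  · exact notMem_support_iff.mp hmem
  have hl : l = fun x => ∑ a' ∈ P.support, coeff a' P * prodfun (fun j (y : ZMod p) => y ^ a' j) x := by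
    funext x
    rw [← hP x, eval_eq']
    rfl
  have h0 := hvan (steps (⇑a) (List.finRange n)) (by rw [steps_univ_length]; exact hk)
  rw [hl, Dfold_sum] at h0
  have h0' := congrFun h0 0
  try simp only at h0'
  have hterm : ∀ a' ∈ P.support,
      Dfold (steps (⇑a) (List.finRange n)) (prodfun (fun j (y : ZMod p) => y ^ a' j))
        = prodfun (fun i => dd^[a i] ((· ^ a' i : ZMod p → ZMod p))) := fun a' _ =>
    Dfold_steps_univ (⇑a) _
  rw [Finset.sum_eq_single_of_mem a hmem (fun a' ha' hne => ?side)] at h0'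
  case side =>
    by_cases hge : ∀ j, a j ≤ a' j
    · rw [hhigh a' ha' (Finsupp.le_def.mpr hge) (Ne.symm hne), zero_mul]
    · push_neg at hge
      obtain ⟨j, hj⟩ := hge
      rw [hterm a' ha']
      have hz : dd^[a j] ((· ^ a' j) : ZMod p → ZMod p) = fun _ => 0 :=
        (dd_pow_key (a' j)).1 (a j) hj
      have : prodfun (fun i => dd^[a i] ((· ^ a' i : ZMod p → ZMod p))) (0 : Fin n → ZMod p) = 0 := by
        simp only [prodfun, Pi.zero_apply]
        refine Finset.prod_eq_zero (Finset.mem_univ j) ?_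
        rw [hz]
      rw [this, mul_zero]
  rw [hterm a hmem] at h0'
  have hval : prodfun (fun i => dd^[a i] ((· ^ a i : ZMod p → ZMod p))) (0 : Fin n → ZMod p)
      = ∏ j, ((-1 : ZMod p) ^ a j * ((a j).factorial : ZMod p)) := by
    simp only [prodfun, Pi.zero_apply]
    refine Finset.prod_congr rfl fun j _ => ?_
    rw [(dd_pow_key (a j)).2]
  rw [hval] at h0'
  have hne : (∏ j, ((-1 : ZMod p) ^ a j * ((a j).factorial : ZMod p))) ≠ 0 := by
    refine Finset.prod_ne_zero_iff.mpr fun j _ => ?_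
    refine mul_ne_zero (pow_ne_zero _ (neg_ne_zero.mpr one_ne_zero)) ?_
    rw [Ne, ZMod.natCast_eq_zero_iff]
    intro hdvd
    have hle := (Nat.Prime.dvd_factorial Fact.out).mp hdvd
    have := hres a hmem j
    have : 2 ≤ p := (Fact.out : p.Prime).two_le
    omega
  exact (mul_eq_zero.mp h0').resolve_right hne

theorem coeff_eq_zero_main (p n k : ℕ) [Fact p.Prime]
    (l : (Fin n → ZMod p) → ZMod p)
    (hvan : ∀ L : List (Fin n → ZMod p), k + 1 ≤ L.length → Dfold L l = fun _ => 0)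
    (P : MvPolynomial (Fin n) (ZMod p)) (hP : ∀ x, eval x P = l x)
    (hres : ∀ s ∈ P.support, ∀ j, (s : (Fin n) →₀ ℕ) j ≤ p - 1) :
    ∀ s : ℕ, ∀ a : Fin n →₀ ℕ, n * (p - 1) ≤ (∑ j, a j) + s → k + 1 ≤ ∑ j, a j →
      coeff a P = 0 := by
  have hsupbound : ∀ a' ∈ P.support, (∑ j, a' j) ≤ n * (p - 1) := by
    intro a' ha'
    calc (∑ j : Fin n, a' j) ≤ ∑ _j : Fin n, (p - 1) :=
          Finset.sum_le_sum fun j _ => hres a' ha' j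
      _ = n * (p - 1) := by simp [Finset.sum_const, mul_comm]
  have hstrict : ∀ a a' : Fin n →₀ ℕ, a ≤ a' → a ≠ a' → (∑ j, a j) < ∑ j, a' j := by
    intro a a' hle hne
    obtain ⟨j, hj⟩ : ∃ j, a j ≠ a' j := by
      by_contra hc
      push_neg at hc
      exact hne (Finsupp.ext hc)
    exact Finset.sum_lt_sum (fun i _ => Finsupp.le_def.mp hle i)
      ⟨j, Finset.mem_univ j, lt_of_le_of_ne (Finsupp.le_def.mp hle j) hj⟩
  intro s
  induction s with
  | zero =>
      intro a hs hk
      refine coeff_eq_zero_core p n k l hvan P hP hres a hk fun a' ha' hle hne => ?_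
      exact absurd (hsupbound a' ha') (by have := hstrict a a' hle hne; omega)
  | succ s ih =>
      intro a hs hk
      refine coeff_eq_zero_core p n k l hvan P hP hres a hk fun a' ha' hle hne => ?_
      have hlt := hstrict a a' hle hne
      exact ih a' (by omega) (by omega)

end Stmt18

/-- A phase polynomial of degree `k ≤ p-1` on `(ℤ/pℤ)ⁿ` with values in `p`-th
roots of unity is the exponential of a polynomial of total degree at most `k`
over `𝔽_p`. -/
theorem stmt_18 (p : ℕ) (hp : p.Prime) (n k : ℕ) (hk : k ≤ p - 1)
    (φ : (Fin n → ZMod p) → ℂ) (hφ : IsPhasePoly k φ) (hroot : ∀ x, φ x ^ p = 1) :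
    ∃ P : MvPolynomial (Fin n) (ZMod p), P.totalDegree ≤ k ∧
      ∀ x, φ x = Complex.exp (2 * Real.pi * Complex.I *
        (((MvPolynomial.eval x P).val : ℂ) / (p : ℂ))) := by
  haveI : Fact p.Prime := ⟨hp⟩
  set ζ : ℂ := Complex.exp (2 * Real.pi * Complex.I / p) with hζdef
  have hprim : IsPrimitiveRoot ζ p := Complex.isPrimitiveRoot_exp p hp.ne_zero
  have hζp : ζ ^ p = 1 := hprim.pow_eq_one
  -- extract the exponent function l
  have hchoice : ∀ x, ∃ i < p, ζ ^ i = φ x := fun x =>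
    hprim.eq_pow_of_pow_eq_one (hroot x)
  set l : (Fin n → ZMod p) → ZMod p := fun x => ((hchoice x).choose : ZMod p) with hldef
  set e : ZMod p → ℂ := fun a => ζ ^ a.val with hedef
  have hφl : φ = fun x => e (l x) := by
    funext x
    obtain ⟨hlt, hpow⟩ := (hchoice x).choose_spec
    rw [← hpow]
    simp only [hedef, hldef]
    rw [ZMod.val_natCast, Nat.mod_eq_of_lt hlt]
  -- basic properties of e
  have hmod : ∀ m : ℕ, ζ ^ (m % p) = ζ ^ m := by
    intro m
    conv_rhs => rw [← Nat.div_add_mod m p]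
    rw [pow_add, pow_mul, hζp, one_pow, one_mul]
  have hemul : ∀ a b, e (a + b) = e a * e b := by
    intro a b
    simp only [hedef]
    rw [ZMod.val_add, hmod, pow_add]
  have hezero : e 0 = 1 := by simp [hedef]
  have hconjζ : ζ * (starRingEnd ℂ) ζ = 1 := by
    rw [hζdef, ← Complex.exp_conj, ← Complex.exp_add]
    have : (starRingEnd ℂ) (2 * (Real.pi : ℂ) * Complex.I / p)
        = -(2 * (Real.pi : ℂ) * Complex.I / p) := by
      rw [map_div₀, map_mul, map_mul, Complex.conj_I, Complex.conj_ofReal, map_ofNat,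
        Complex.conj_natCast]
      ring
    rw [this, add_neg_cancel, Complex.exp_zero]
  have heconj : ∀ a, (starRingEnd ℂ) (e a) = e (-a) := by
    intro a
    have h1 : e a * (starRingEnd ℂ) (e a) = 1 := by
      show ζ ^ a.val * (starRingEnd ℂ) (ζ ^ a.val) = 1
      rw [map_pow, ← mul_pow, hconjζ, one_pow]
    have h2 : e a * e (-a) = 1 := by rw [← hemul, add_neg_cancel, hezero]
    have hne : e a ≠ 0 := left_ne_zero_of_mul_eq_one h1
    exact mul_left_cancel₀ hne (h1.trans h2.symm)
  have heone : ∀ a, e a = 1 → a = 0 := by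
    intro a ha
    have hdvd : p ∣ a.val := (hprim.pow_eq_one_iff_dvd a.val).mp ha
    have hval := ZMod.val_lt a
    have h0 : a.val = 0 := Nat.eq_zero_of_dvd_of_lt hdvd hval
    exact (ZMod.val_eq_zero a).mp h0
  -- bridge between phaseDeriv and Dfold
  have hbridge : ∀ (L : List (Fin n → ZMod p)) (g : (Fin n → ZMod p) → ZMod p),
      L.foldl phaseDeriv (fun x => e (g x)) = fun x => e (Stmt18.Dfold L g x) := by
    intro L
    induction L with
    | nil => intro g; rfl
    | cons t L ih =>
        intro g
        rw [List.foldl_cons]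
        have hstep : phaseDeriv (fun x => e (g x)) t = fun x => e (Stmt18.Dop g t x) := by
          funext x
          show e (g x) * (starRingEnd ℂ) (e (g (x + t))) = e (Stmt18.Dop g t x)
          rw [heconj, ← hemul, ← sub_eq_add_neg]
          rfl
        rw [hstep]
        exact ih (Stmt18.Dop g t)
  -- vanishing of iterated differences
  have hvan0 : ∀ (t : Fin (k + 1) → Fin n → ZMod p) x,
      Stmt18.Dfold (List.ofFn t) l x = 0 := by
    intro t x
    have := hφ.2 t x
    rw [hφl, hbridge] at this
    exact heone _ this
  have hvan : ∀ L : List (Fin n → ZMod p), k + 1 ≤ L.length →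
      Stmt18.Dfold L l = fun _ => 0 := by
    intro L hL
    have hsplit : L = L.take (k+1) ++ L.drop (k+1) := (List.take_append_drop _ _).symm
    have hlen : (L.take (k+1)).length = k + 1 := by
      rw [List.length_take]; omega
    set t : Fin (k+1) → Fin n → ZMod p := fun i => (L.take (k+1)).getD i 0 with htdef
    have hofn : List.ofFn t = L.take (k+1) := by
      refine List.ext_getElem (by simp [hlen]) fun i h1 h2 => ?_
      simp only [List.getElem_ofFn, htdef]
      rw [List.getD_eq_getElem _ _ h2]
    have h1 : Stmt18.Dfold (L.take (k+1)) l = fun _ => 0 := by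
      rw [← hofn]
      funext x
      exact hvan0 t x
    conv_lhs => rw [hsplit]
    rw [Stmt18.Dfold_append, h1, Stmt18.Dfold_zero]
  -- get the representing polynomial
  have hcard : Fintype.card (ZMod p) = p := ZMod.card p
  have hmem : l ∈ (MvPolynomial.restrictDegree (Fin n) (ZMod p)
      (Fintype.card (ZMod p) - 1)).map (MvPolynomial.evalₗ (ZMod p) (Fin n)) := by
    rw [MvPolynomial.map_restrict_dom_evalₗ]; trivial
  obtain ⟨P, hPmem, hPeval⟩ := Submodule.mem_map.mp hmem
  have hPev : ∀ x, MvPolynomial.eval x P = l x := fun x => congrFun hPeval x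
  have hres : ∀ s ∈ P.support, ∀ j, (s : (Fin n) →₀ ℕ) j ≤ p - 1 := by
    intro s hs j
    have := (MvPolynomial.mem_restrictDegree _ _ _).mp hPmem s hs j
    rwa [hcard] at this
  refine ⟨P, ?_, ?_⟩
  · -- total degree bound
    rw [MvPolynomial.totalDegree]
    refine Finset.sup_le fun a ha => ?_
    by_contra hgt
    push_neg at hgt
    have hsum : (a.sum fun _ e => e) = ∑ j, a j :=
      Finsupp.sum_fintype _ _ (fun _ => rfl)
    have hz := Stmt18.coeff_eq_zero_main p n k l hvan P hPev hres (n * (p-1)) a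
      (by omega) (by omega)
    exact (MvPolynomial.mem_support_iff.mp ha) hz
  · intro x
    rw [hφl]
    show e (l x) = _
    rw [← hPev x]
    simp only [hedef, hζdef, ← Complex.exp_nat_mul]
    congr 1
    ring
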